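/- arXiv:1405.4712 — 2 statements merged into one kernel-verified Lean document; each statement's English description precedes it below -/
import Mathlib

section
/- Let ν > 1/2 and define λ_ν(x) = ∑_{n≥0} (2n+1) x^{2n} / (4^n · n! · (ν+1)_n). Then λ_ν(x) < cosh x for all x > 0. -/
noncomputable def lam (ν x : ℝ) : ℝ :=
  ∑' n : ℕ, (2 * (n : ℝ) + 1) * x ^ (2 * n) /
    ((4 : ℝ) ^ n * (n.factorial : ℝ) * (ascPochhammer ℝ n).eval (ν + 1))

lemma poch_pos (ν : ℝ) (hν : 1/2 < ν) (n : ℕ) :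
    0 < (ascPochhammer ℝ n).eval (ν + 1) := by
  induction n with
  | zero => simp
  | succ n ih =>
    rw [ascPochhammer_succ_right]
    simp only [Polynomial.eval_mul, Polynomial.eval_add, Polynomial.eval_X,
      Polynomial.eval_natCast]
    have : (0:ℝ) < ν + 1 + n := by positivity
    nlinarith

lemma key_ineq (ν : ℝ) (hν : 1/2 < ν) (n : ℕ) :
    ((2*n+1).factorial : ℝ) ≤ (4:ℝ) ^ n * (n.factorial : ℝ) * (ascPochhammer ℝ n).eval (ν + 1) := by
  induction n with
  | zero => simp
  | succ n ih =>
    have hp := poch_pos ν hν n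
    rw [ascPochhammer_succ_right]
    simp only [Polynomial.eval_mul, Polynomial.eval_add, Polynomial.eval_X,
      Polynomial.eval_natCast]
    have h1 : (2*(n+1)+1).factorial = (2*n+3) * ((2*n+2) * (2*n+1).factorial) := by
      have : 2*(n+1)+1 = (2*n+1) + 1 + 1 := by ring
      rw [this, Nat.factorial_succ, Nat.factorial_succ]
    have h2 : ((2*(n+1)+1).factorial : ℝ) = (2*n+3) * ((2*n+2) * ((2*n+1).factorial : ℝ)) := by
      rw [h1]; push_cast; ring
    rw [h2]
    have hfac : (0:ℝ) < (n.factorial : ℝ) := by positivity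
    have h4 : (0:ℝ) < (4:ℝ)^n := by positivity
    have hν1 : (2:ℝ)*n + 3 ≤ 2 * (ν + 1 + n) := by linarith
    calc ((2:ℝ)*n+3) * ((2*n+2) * ((2*n+1).factorial : ℝ))
        ≤ (2*(ν+1+n)) * ((2*n+2) * ((4:ℝ) ^ n * (n.factorial : ℝ) * (ascPochhammer ℝ n).eval (ν + 1))) := by
          have hpos : (0:ℝ) < 2*n+2 := by positivity
          have h5 : (0:ℝ) < ν + 1 + n := by linarith
          have := mul_le_mul hν1 (mul_le_mul_of_nonneg_left ih (le_of_lt hpos))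
            (by positivity) (by positivity)
          exact this
      _ = (4:ℝ) ^ (n+1) * ((n+1).factorial : ℝ) * ((ascPochhammer ℝ n).eval (ν + 1) * (ν + 1 + n)) := by
          rw [pow_succ, Nat.factorial_succ]; push_cast; ring

theorem stmt_3 (ν : ℝ) (hν : 1/2 < ν) (x : ℝ) (hx : 0 < x) :
    lam ν x < Real.cosh x := by
  rw [Real.cosh_eq_tsum, lam]
  set f : ℕ → ℝ := fun n => (2 * (n : ℝ) + 1) * x ^ (2 * n) /
    ((4 : ℝ) ^ n * (n.factorial : ℝ) * (ascPochhammer ℝ n).eval (ν + 1)) with hf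
  set g : ℕ → ℝ := fun n => x ^ (2 * n) / ((2*n).factorial : ℝ) with hg
  have hgsum : Summable g := by
    have := (Real.summable_pow_div_factorial x).comp_injective
      (fun a b h => by simp only at h; omega : Function.Injective (fun n => 2*n))
    exact this
  have h0 : ∀ n, 0 ≤ f n := by
    intro n
    have := poch_pos ν hν n
    have : (0:ℝ) < (4 : ℝ) ^ n * (n.factorial : ℝ) * (ascPochhammer ℝ n).eval (ν + 1) := by
      positivity
    positivity
  have hle : ∀ n, f n ≤ g n := by
    intro n
    have hden : (0:ℝ) < (4 : ℝ) ^ n * (n.factorial : ℝ) * (ascPochhammer ℝ n).eval (ν + 1) := by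
      have := poch_pos ν hν n; positivity
    have hden2 : (0:ℝ) < ((2*n).factorial : ℝ) := by positivity
    rw [hf, hg, div_le_div_iff₀ hden hden2]
    have hxpow : (0:ℝ) ≤ x ^ (2*n) := by positivity
    have hk := key_ineq ν hν n
    have h2 : ((2*n+1).factorial : ℝ) = (2*(n:ℝ)+1) * ((2*n).factorial : ℝ) := by
      rw [Nat.factorial_succ]; push_cast; ring
    calc (2 * (n:ℝ) + 1) * x ^ (2*n) * ((2*n).factorial : ℝ)
        = x ^ (2*n) * ((2*n+1).factorial : ℝ) := by rw [h2]; ring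
      _ ≤ x ^ (2*n) * ((4 : ℝ) ^ n * (n.factorial : ℝ) * (ascPochhammer ℝ n).eval (ν + 1)) :=
          mul_le_mul_of_nonneg_left hk hxpow
      _ = x ^ (2*n) * ((4 : ℝ) ^ n * (n.factorial : ℝ) * (ascPochhammer ℝ n).eval (ν + 1)) := rfl
  have hi : f 1 < g 1 := by
    have hx2 : (0:ℝ) < x ^ 2 := by positivity
    have : f 1 = 3 * x ^ 2 / (4 * (ν + 1)) := by
      simp [hf, ascPochhammer_one]
      ring
    rw [this]
    have : g 1 = x ^ 2 / 2 := by
      norm_num [hg]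
    rw [this]
    rw [div_lt_div_iff₀ (by linarith) (by norm_num)]
    nlinarith
  exact Summable.tsum_lt_tsum_of_nonneg h0 hle hi hgsum
end

section
/- Let -1 < ν < -1/2 and define λ_ν(x) = ∑_{n≥0} (2n+1) x^{2n} / (4^n · n! · (ν+1)_n). Then λ_ν(x) > cosh x + x·sinh x for all x > 0. -/
lemma poch_mono (n : ℕ) {a b : ℝ} (ha : 0 < a) (hab : a ≤ b) :
    (ascPochhammer ℝ n).eval a ≤ (ascPochhammer ℝ n).eval b := by
  induction n with
  | zero => simp
  | succ n ih =>
      rw [ascPochhammer_succ_eval, ascPochhammer_succ_eval]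
      have h1 : 0 < (ascPochhammer ℝ n).eval a := ascPochhammer_pos n a ha
      have h2 : (0:ℝ) ≤ (n:ℝ) := Nat.cast_nonneg n
      nlinarith [ascPochhammer_pos n b (lt_of_lt_of_le ha hab)]

lemma pow_le_poch (n : ℕ) {a : ℝ} (ha : 0 < a) :
    a ^ n ≤ (ascPochhammer ℝ n).eval a := by
  induction n with
  | zero => simp
  | succ n ih =>
      rw [ascPochhammer_succ_eval, pow_succ]
      have h1 : 0 < (ascPochhammer ℝ n).eval a := ascPochhammer_pos n a ha
      have h2 : (0:ℝ) ≤ (n:ℝ) := Nat.cast_nonneg n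
      nlinarith [pow_pos ha n]

lemma poch_half (n : ℕ) :
    (4:ℝ) ^ n * (n.factorial : ℝ) * (ascPochhammer ℝ n).eval (1/2 : ℝ)
      = ((2*n).factorial : ℝ) := by
  induction n with
  | zero => simp
  | succ n ih =>
      have h : 2 * (n+1) = (2*n+1) + 1 := by ring
      rw [h, ascPochhammer_succ_eval, pow_succ]
      simp only [Nat.factorial_succ]
      push_cast
      linear_combination (4 * ((n:ℝ)+1) * (1/2 + (n:ℝ))) * ih

lemma two_n_one_le (n : ℕ) : (2 * (n:ℝ) + 1) ≤ 3 ^ n := by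
  induction n with
  | zero => norm_num
  | succ n ih =>
      push_cast
      rw [pow_succ]
      push_cast at ih
      nlinarith [pow_pos (by norm_num : (0:ℝ) < 3) n]

theorem stmt_4 (ν : ℝ) (hν₁ : -1 < ν) (hν₂ : ν < -(1/2)) (x : ℝ) (hx : 0 < x) :
    lam ν x > Real.cosh x + x * Real.sinh x := by
  have hν : 0 < ν + 1 := by linarith
  have hνh : ν + 1 ≤ 1/2 := by linarith
  set a : ℕ → ℝ := fun n => (2 * (n : ℝ) + 1) * x ^ (2 * n) /
    ((4 : ℝ) ^ n * (n.factorial : ℝ) * (ascPochhammer ℝ n).eval (ν + 1)) with ha_def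
  set b : ℕ → ℝ := fun n => (2 * (n : ℝ) + 1) * x ^ (2 * n) / ((2*n).factorial : ℝ)
    with hb_def
  have hPpos : ∀ n : ℕ, 0 < (ascPochhammer ℝ n).eval (ν + 1) := fun n =>
    ascPochhammer_pos n _ hν
  have hDpos : ∀ n : ℕ, 0 < (4:ℝ) ^ n * (n.factorial : ℝ) *
      (ascPochhammer ℝ n).eval (ν + 1) := by
    intro n
    have h1 := hPpos n
    have h2 : (0:ℝ) < n.factorial := by exact_mod_cast Nat.factorial_pos n
    positivity
  have hfacpos : ∀ n : ℕ, (0:ℝ) < (2*n).factorial := by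
    intro n; exact_mod_cast Nat.factorial_pos _
  have hx2n : ∀ n : ℕ, x ^ (2*n) = (x^2)^n := by
    intro n; rw [← pow_mul, mul_comm]
  -- summability of a
  have hsa : Summable a := by
    apply Summable.of_nonneg_of_le
      (f := fun n => (3 * x^2 / (ν+1)) ^ n / n.factorial)
      (fun n => le_of_lt (div_pos (by positivity) (hDpos n)))
    · intro n
      have hfac : (0:ℝ) < n.factorial := by exact_mod_cast Nat.factorial_pos n
      have e1 : (3 * x^2 / (ν+1)) ^ n / n.factorial
          = (3^n * (x^2)^n) / ((ν+1)^n * n.factorial) := by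
        rw [div_pow, mul_pow]; field_simp
      rw [e1, hx2n]
      apply div_le_div₀ (by positivity)
      · have := two_n_one_le n
        nlinarith [pow_nonneg (sq_nonneg x) n]
      · positivity
      · have key : (ν+1)^n ≤ (ascPochhammer ℝ n).eval (ν + 1) := pow_le_poch n hν
        have h4 : (1:ℝ) ≤ 4 ^ n := one_le_pow₀ (by norm_num)
        calc (ν+1)^n * (n.factorial:ℝ)
            ≤ (ascPochhammer ℝ n).eval (ν + 1) * n.factorial :=
              mul_le_mul_of_nonneg_right key hfac.le
          _ = 1 * ((n.factorial:ℝ) * (ascPochhammer ℝ n).eval (ν + 1)) := by ring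
          _ ≤ 4 ^ n * ((n.factorial:ℝ) * (ascPochhammer ℝ n).eval (ν + 1)) := by
              have := hPpos n
              exact mul_le_mul_of_nonneg_right h4 (by positivity)
          _ = 4 ^ n * n.factorial * (ascPochhammer ℝ n).eval (ν + 1) := by ring
    · exact Real.summable_pow_div_factorial _
  -- summability of b
  have hsb : Summable b := by
    apply Summable.of_nonneg_of_le
      (f := fun n => (3 * x^2) ^ n / n.factorial)
      (fun n => le_of_lt (div_pos (by positivity) (hfacpos n)))
    · intro n
      have hfac : (0:ℝ) < n.factorial := by exact_mod_cast Nat.factorial_pos n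
      have e1 : (3 * x^2) ^ n / n.factorial = (3^n * (x^2)^n) / n.factorial := by
        rw [mul_pow]
      rw [e1, hx2n]
      apply div_le_div₀ (by positivity)
      · have := two_n_one_le n
        nlinarith [pow_nonneg (sq_nonneg x) n]
      · positivity
      · exact_mod_cast Nat.factorial_le (by omega)
    · exact Real.summable_pow_div_factorial _
  -- b n ≤ a n, strict at 1
  have hba : ∀ n, b n ≤ a n := by
    intro n
    simp only [ha_def, hb_def]
    apply div_le_div₀ (by positivity) le_rfl (hDpos n)
    rw [← poch_half n]
    have hfac : (0:ℝ) < n.factorial := by exact_mod_cast Nat.factorial_pos n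
    exact mul_le_mul_of_nonneg_left (poch_mono n hν hνh)
      (by positivity : (0:ℝ) ≤ 4 ^ n * (n.factorial:ℝ))
  have hba1 : b 1 < a 1 := by
    simp only [ha_def, hb_def]
    simp only [ascPochhammer_one, Polynomial.eval_X]
    norm_num [Nat.factorial]
    rw [div_lt_div_iff₀ (by norm_num) (by linarith)]
    nlinarith [pow_pos hx 2]
  -- identity: cosh x + x sinh x = ∑' b
  have hd : Summable (fun n : ℕ => (2*(n:ℝ)) * x ^ (2*n) / ((2*n).factorial : ℝ)) := by
    apply Summable.of_nonneg_of_le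
      (f := fun n => (3 * x^2) ^ n / n.factorial)
      (fun n => by positivity)
    · intro n
      have hfac : (0:ℝ) < n.factorial := by exact_mod_cast Nat.factorial_pos n
      have e1 : (3 * x^2) ^ n / n.factorial = (3^n * (x^2)^n) / n.factorial := by
        rw [mul_pow]
      rw [e1, hx2n]
      apply div_le_div₀ (by positivity)
      · have := two_n_one_le n
        nlinarith [pow_nonneg (sq_nonneg x) n]
      · positivity
      · exact_mod_cast Nat.factorial_le (by omega)
    · exact Real.summable_pow_div_factorial _
  have hc : Summable (fun n : ℕ => x ^ (2*n) / ((2*n).factorial : ℝ)) :=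
    (Real.hasSum_cosh x).summable
  have hid : Real.cosh x + x * Real.sinh x = ∑' n, b n := by
    have hsplit : ∀ n : ℕ, b n = x ^ (2*n) / ((2*n).factorial : ℝ)
        + (2*(n:ℝ)) * x ^ (2*n) / ((2*n).factorial : ℝ) := by
      intro n
      simp only [hb_def]
      ring
    rw [tsum_congr hsplit, Summable.tsum_add hc hd, ← Real.cosh_eq_tsum]
    congr 1
    have h0 : (2*((0:ℕ):ℝ)) * x ^ (2*0) / (((2*0).factorial : ℕ) : ℝ) = 0 := by
      simp
    rw [Summable.tsum_eq_zero_add hd, h0, zero_add]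
    have hshift : ∀ n : ℕ, (2*(((n:ℕ)+1:ℕ):ℝ)) * x ^ (2*(n+1)) / (((2*(n+1)).factorial : ℕ) : ℝ)
        = x * (x ^ (2*n+1) / ((2*n+1).factorial : ℝ)) := by
      intro n
      have h1 : 2*(n+1) = (2*n+1) + 1 := by ring
      rw [h1, Nat.factorial_succ]
      have h2 : x ^ (2*n+1+1) = x * x ^ (2*n+1) := by rw [pow_succ]; ring
      rw [h2]
      have hfp : (0:ℝ) < (2*n+1).factorial := by exact_mod_cast Nat.factorial_pos _
      field_simp
      push_cast
      ring
    rw [tsum_congr hshift, tsum_mul_left, ← Real.sinh_eq_tsum]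
  have hlam : lam ν x = ∑' n, a n := by
    rw [ha_def]; rfl
  rw [hid, hlam]
  exact Summable.tsum_lt_tsum_of_nonneg (fun n => le_of_lt (div_pos (by positivity) (hfacpos n)))
    hba hba1 hsa
end
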